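/- arXiv:math/9905200 — 2 statements merged into one kernel-verified Lean document; each statement's English description precedes it below -/
import Mathlib

section
/- Let f(z) = 2/(a + 2^{3/2}√(1-z)) for a > 0, where √ denotes the principal branch with branch cut [1,∞), positive for real z < 1. Then f is analytic on the open unit disc and its Taylor coefficients c_n = f^{(n)}(0)/n! are all real and positive. -/
section GFaux
open Complex

noncomputable def GFu (z : ℂ) : ℂ := (1 - z) ^ ((1:ℂ)/2)

lemma GF_slit {z : ℂ} (hz : z ∈ Metric.ball (0:ℂ) 1) : (1 - z) ∈ Complex.slitPlane := by
  rw [Metric.mem_ball, dist_zero_right] at hz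
  exact Or.inl (by
    have : z.re ≤ ‖z‖ := Complex.re_le_norm z
    simp only [sub_re, one_re]; linarith)

lemma GFu_ne {z : ℂ} (hz : z ∈ Metric.ball (0:ℂ) 1) : GFu z ≠ 0 := by
  have h := Complex.slitPlane_ne_zero (GF_slit hz)
  simp [GFu, Complex.cpow_eq_zero_iff, h]

lemma GFu_re_pos {z : ℂ} (hz : z ∈ Metric.ball (0:ℂ) 1) : 0 < (GFu z).re := by
  have h0 := Complex.slitPlane_ne_zero (GF_slit hz)
  have harg : |Complex.arg (1 - z)| < Real.pi := by
    rcases abs_le.mpr ⟨le_of_lt (Complex.neg_pi_lt_arg (1-z)), Complex.arg_le_pi (1-z)⟩ |>.lt_or_eq with h | h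
    · exact h
    · exfalso
      have := (Complex.mem_slitPlane_iff_arg.mp (GF_slit hz)).1
      rcases abs_eq (le_of_lt Real.pi_pos) |>.mp h with h' | h'
      · exact this h'
      · exact absurd h' (ne_of_gt (Complex.neg_pi_lt_arg (1-z)))
  rw [GFu, Complex.cpow_def_of_ne_zero h0, Complex.exp_re]
  apply mul_pos (Real.exp_pos _)
  apply Real.cos_pos_of_mem_Ioo
  have him : (Complex.log (1 - z) * ((1:ℂ)/2)).im = Complex.arg (1-z) * (1/2) := by
    simp [Complex.mul_im, Complex.log_im]
  rw [him]
  constructor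
  · nlinarith [abs_lt.mp harg]
  · nlinarith [abs_lt.mp harg]

noncomputable def GFb : ℝ := (2:ℝ) ^ ((3:ℝ)/2)

lemma GFb_pos : 0 < GFb := Real.rpow_pos_of_pos (by norm_num) _

lemma GFb_eq : ((2:ℂ) ^ ((3:ℂ)/2)) = (GFb : ℂ) := by
  rw [GFb, Complex.ofReal_cpow (by norm_num : (0:ℝ) ≤ 2)]
  norm_num

noncomputable def GFv (a : ℝ) (z : ℂ) : ℂ := (a:ℂ) + (GFb:ℂ) * GFu z

lemma GFv_re_pos {a : ℝ} (ha : 0 < a) {z : ℂ} (hz : z ∈ Metric.ball (0:ℂ) 1) :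
    0 < (GFv a z).re := by
  have h1 := GFu_re_pos hz
  have h2 := GFb_pos
  simp only [GFv, Complex.add_re, Complex.ofReal_re, Complex.mul_re, Complex.ofReal_im]
  nlinarith

lemma GFv_ne {a : ℝ} (ha : 0 < a) {z : ℂ} (hz : z ∈ Metric.ball (0:ℂ) 1) :
    GFv a z ≠ 0 := by
  intro h
  have := GFv_re_pos ha hz
  rw [h] at this; simp at this

lemma GFu_hasDeriv {z : ℂ} (hz : z ∈ Metric.ball (0:ℂ) 1) :
    HasDerivAt GFu (-(2⁻¹ * (GFu z)⁻¹)) z := by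
  have h : HasDerivAt (fun z : ℂ => 1 - z) (-1) z := by
    simpa using (hasDerivAt_id z).const_sub 1
  have := h.cpow_const (c := (1:ℂ)/2) (GF_slit hz)
  convert this using 1
  · rfl
  have : (1:ℂ)/2 - 1 = -(1/2) := by norm_num
  rw [this, Complex.cpow_neg]
  rw [GFu]
  ring

noncomputable def GFT (a : ℝ) (t : ℝ × ℕ × ℕ) (z : ℂ) : ℂ :=
  (t.1 : ℂ) * (GFu z) ^ (-(t.2.1:ℤ)) * (GFv a z) ^ (-(t.2.2:ℤ))

noncomputable def GFstep (t : ℝ × ℕ × ℕ) : List (ℝ × ℕ × ℕ) :=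
  [(t.1 * t.2.1 / 2, t.2.1 + 2, t.2.2), (t.1 * t.2.2 * GFb / 2, t.2.1 + 1, t.2.2 + 1)]

noncomputable def GFS (a : ℝ) (L : List (ℝ × ℕ × ℕ)) (z : ℂ) : ℂ :=
  (L.map (fun t => GFT a t z)).sum

lemma GFT_hasDeriv {a : ℝ} (ha : 0 < a) (t : ℝ × ℕ × ℕ) {z : ℂ}
    (hz : z ∈ Metric.ball (0:ℂ) 1) :
    HasDerivAt (GFT a t) (GFS a (GFstep t) z) z := by
  obtain ⟨c, i, j⟩ := t
  have hu := GFu_ne hz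
  have hv := GFv_ne ha hz
  have hu' := GFu_hasDeriv hz
  have hv' : HasDerivAt (GFv a) ((GFb:ℂ) * -(2⁻¹ * (GFu z)⁻¹)) z := by
    exact (hu'.const_mul (GFb:ℂ)).const_add (a:ℂ)
  have f1 : HasDerivAt (fun z => (GFu z) ^ (-(i:ℤ)))
      ((-(i:ℤ)) * (GFu z) ^ (-(i:ℤ) - 1) * -(2⁻¹ * (GFu z)⁻¹)) z :=
    by simpa [Function.comp_def] using (hasDerivAt_zpow (-(i:ℤ)) (GFu z) (Or.inl hu)).comp z hu'
  have f2 : HasDerivAt (fun z => (GFv a z) ^ (-(j:ℤ)))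
      ((-(j:ℤ)) * (GFv a z) ^ (-(j:ℤ) - 1) * ((GFb:ℂ) * -(2⁻¹ * (GFu z)⁻¹))) z :=
    by simpa [Function.comp_def] using (hasDerivAt_zpow (-(j:ℤ)) (GFv a z) (Or.inl hv)).comp z hv'
  have := ((f1.const_mul (c:ℂ)).mul f2)
  refine this.congr_deriv ?_
  simp only [GFS, GFstep, GFT, List.map_cons, List.map_nil, List.sum_cons, List.sum_nil,
    add_zero]
  push_cast
  have e1 : ∀ (m : ℕ) (w : ℂ), w ≠ 0 → w ^ (-(m:ℤ) - 1) = w⁻¹ * w ^ (-(m:ℤ)) := by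
    intro m w hw
    rw [sub_eq_add_neg, zpow_add₀ hw, zpow_neg_one]
    ring
  have e2 : ∀ (m : ℕ) (w : ℂ), w ≠ 0 → w ^ (-((m:ℤ)+2)) = w⁻¹ * w⁻¹ * w ^ (-(m:ℤ)) := by
    intro m w hw
    rw [neg_add, zpow_add₀ hw, show ((-2:ℤ)) = (-1) + (-1) by norm_num, zpow_add₀ hw,
      zpow_neg_one]
    ring
  have e3 : ∀ (m : ℕ) (w : ℂ), w ≠ 0 → w ^ (-((m:ℤ)+1)) = w⁻¹ * w ^ (-(m:ℤ)) := by
    intro m w hw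
    rw [neg_add, zpow_add₀ hw, zpow_neg_one]
    ring
  rw [e1 i _ hu, e1 j _ hv, e2 i _ hu, e3 i _ hu, e3 j _ hv]
  ring

lemma GFS_append (a : ℝ) (L1 L2 : List (ℝ × ℕ × ℕ)) (z : ℂ) :
    GFS a (L1 ++ L2) z = GFS a L1 z + GFS a L2 z := by
  simp [GFS]

lemma GFS_hasDeriv {a : ℝ} (ha : 0 < a) (L : List (ℝ × ℕ × ℕ)) {z : ℂ}
    (hz : z ∈ Metric.ball (0:ℂ) 1) :
    HasDerivAt (GFS a L) (GFS a (L.flatMap GFstep) z) z := by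
  induction L with
  | nil => exact hasDerivAt_const z (0:ℂ)
  | cons t L ih =>
      have h1 : (t :: L).flatMap GFstep = GFstep t ++ L.flatMap GFstep := by
        simp [List.flatMap]
      rw [h1, GFS_append]
      have : HasDerivAt (fun z => GFT a t z + GFS a L z)
          (GFS a (GFstep t) z + GFS a (L.flatMap GFstep) z) z :=
        (GFT_hasDeriv ha t hz).add ih
      exact this

noncomputable def GFR (a : ℝ) (t : ℝ × ℕ × ℕ) : ℝ := t.1 * (a + GFb) ^ (-(t.2.2:ℤ))

lemma GFS_zero (a : ℝ) (L : List (ℝ × ℕ × ℕ)) :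
    GFS a L 0 = (((L.map (GFR a)).sum : ℝ) : ℂ) := by
  induction L with
  | nil => simp [GFS]
  | cons t L ih =>
      simp only [GFS, List.map_cons, List.sum_cons] at *
      rw [ih]
      have hu0 : GFu 0 = 1 := by simp [GFu]
      have hv0 : GFv a 0 = ((a + GFb : ℝ) : ℂ) := by rw [GFv, hu0]; push_cast; ring
      simp only [GFT, GFR, hu0, hv0]
      push_cast [zpow_neg]
      simp

def GFInv (L : List (ℝ × ℕ × ℕ)) : Prop :=
  (∀ t ∈ L, 0 ≤ t.1 ∧ 1 ≤ t.2.2) ∧ ∃ t ∈ L, 0 < t.1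

lemma GFInv_step {L : List (ℝ × ℕ × ℕ)} (h : GFInv L) : GFInv (L.flatMap GFstep) := by
  obtain ⟨h1, t, ht, htc⟩ := h
  constructor
  · intro s hs
    rw [List.mem_flatMap] at hs
    obtain ⟨t', ht', hs⟩ := hs
    obtain ⟨hc, hj⟩ := h1 t' ht'
    simp only [GFstep, List.mem_cons, List.mem_singleton, List.not_mem_nil, or_false] at hs
    rcases hs with rfl | rfl
    · exact ⟨div_nonneg (mul_nonneg hc (Nat.cast_nonneg _)) two_pos.le, hj⟩
    · refine ⟨div_nonneg (mul_nonneg (mul_nonneg hc (Nat.cast_nonneg _)) GFb_pos.le)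
        two_pos.le, ?_⟩
      show 1 ≤ t'.2.2 + 1
      omega
  · refine ⟨(t.1 * t.2.2 * GFb / 2, t.2.1 + 1, t.2.2 + 1), ?_, ?_⟩
    · rw [List.mem_flatMap]
      exact ⟨t, ht, by simp [GFstep]⟩
    · have hj := (h1 t ht).2
      have := GFb_pos
      simp only
      positivity

lemma GFInv_sum_pos {a : ℝ} (ha : 0 < a) {L : List (ℝ × ℕ × ℕ)} (h : GFInv L) :
    0 < (L.map (GFR a)).sum := by
  obtain ⟨h1, t, ht, htc⟩ := h
  have hab : 0 < a + GFb := by have := GFb_pos; linarith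
  have hnn : ∀ x ∈ L.map (GFR a), 0 ≤ x := by
    intro x hx
    rw [List.mem_map] at hx
    obtain ⟨s, hs, rfl⟩ := hx
    have := (h1 s hs).1
    have : (0:ℝ) < (a + GFb) ^ (-(s.2.2:ℤ)) := zpow_pos hab _
    unfold GFR
    positivity
  have hmem : GFR a t ∈ L.map (GFR a) := List.mem_map_of_mem ht
  have hpos : 0 < GFR a t := by
    have : (0:ℝ) < (a + GFb) ^ (-(t.2.2:ℤ)) := zpow_pos hab _
    unfold GFR
    positivity
  calc 0 < GFR a t := hpos
  _ ≤ _ := List.single_le_sum hnn _ hmem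

end GFaux


open Real

/-- `f(z) = 2/(a + 2^{3/2}√(1-z))` (principal branch, branch cut `[1,∞)`) is
analytic on the open unit disc and all its Taylor coefficients
`cₙ = f⁽ⁿ⁾(0)/n!` are real and positive. -/
theorem generating_function_positive_coefficients (a : ℝ) (ha : 0 < a) :
    DifferentiableOn ℂ
      (fun z : ℂ => 2 / ((a : ℂ) + 2 ^ ((3 : ℂ) / 2) * (1 - z) ^ ((1 : ℂ) / 2)))
      (Metric.ball (0 : ℂ) 1) ∧
    ∀ n : ℕ, ∃ c : ℝ, 0 < c ∧
      iteratedDeriv n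
          (fun z : ℂ => 2 / ((a : ℂ) + 2 ^ ((3 : ℂ) / 2) * (1 - z) ^ ((1 : ℂ) / 2))) 0
        / (n.factorial : ℂ) = (c : ℂ) := by
  set F : ℂ → ℂ :=
    fun z : ℂ => 2 / ((a : ℂ) + 2 ^ ((3 : ℂ) / 2) * (1 - z) ^ ((1 : ℂ) / 2)) with hF
  have hFeq : ∀ z, F z = GFT a (2,0,1) z := by
    intro z
    simp only [hF, GFT, GFv, GFu, GFb_eq]
    push_cast
    rw [div_eq_mul_inv]
    norm_num
  have key : ∀ n : ℕ, ∃ L, GFInv L ∧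
      ∀ z ∈ Metric.ball (0:ℂ) 1, iteratedDeriv n F z = GFS a L z := by
    intro n
    induction n with
    | zero =>
        refine ⟨[(2,0,1)], ⟨?_, ⟨(2,0,1), by simp, by norm_num⟩⟩, ?_⟩
        · intro t ht
          simp only [List.mem_singleton] at ht
          subst ht
          norm_num
        · intro z hz
          simp [iteratedDeriv_zero, hFeq z, GFS]
    | succ n ih =>
        obtain ⟨L, hI, hL⟩ := ih
        refine ⟨L.flatMap GFstep, GFInv_step hI, ?_⟩
        intro z hz
        rw [iteratedDeriv_succ]
        have hev : iteratedDeriv n F =ᶠ[nhds z] GFS a L :=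
          Filter.eventuallyEq_of_mem (Metric.isOpen_ball.mem_nhds hz) hL
        rw [hev.deriv_eq]
        exact (GFS_hasDeriv ha L hz).deriv
  constructor
  · intro z hz
    have hev : F =ᶠ[nhds z] GFS a [(2,0,1)] :=
      Filter.eventuallyEq_of_mem (Metric.isOpen_ball.mem_nhds hz)
        (fun w _ => by simp [GFS, ← hFeq w])
    have : DifferentiableAt ℂ F z :=
      hev.differentiableAt_iff.mpr (GFS_hasDeriv ha _ hz).differentiableAt
    exact this.differentiableWithinAt
  · intro n
    obtain ⟨L, hI, hL⟩ := key n
    refine ⟨(L.map (GFR a)).sum / n.factorial,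
      div_pos (GFInv_sum_pos ha hI) (by positivity), ?_⟩
    rw [hL 0 (by simp), GFS_zero]
    push_cast
    ring
end

section
/- Let (μ_n) be a sequence of probability measures on the compact space M₁(K) of probability measures on a compact metric space K, and suppose that for every l ≥ 1 the l-th moment measures M_n^{(l)} of μ_n (defined by M_n^{(l)}(A₁×…×A_l) = ∫ ν(A₁)…ν(A_l) dμ_n(ν)) converge weakly to the l-th moment measures of a probability measure μ on M₁(K). Then μ_n converges weakly to μ. -/
open MeasureTheory Filter

noncomputable instance probabilityMeasureMeasurableSpace
    {X : Type*} [MeasurableSpace X] [TopologicalSpace X] [OpensMeasurableSpace X] :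
    MeasurableSpace (ProbabilityMeasure X) := borel _

instance probabilityMeasureBorelSpace
    {X : Type*} [MeasurableSpace X] [TopologicalSpace X] [OpensMeasurableSpace X] :
    BorelSpace (ProbabilityMeasure X) := ⟨rfl⟩

/-- The `l`-th moment measure of a random probability measure with law `μ`:
the measure on `K^l` obtained by averaging `ν^{⊗l}` over `ν ∼ μ`. -/
noncomputable def momentMeasure {K : Type*} [MeasurableSpace K] [TopologicalSpace K]
    [OpensMeasurableSpace K]
    (μ : Measure (ProbabilityMeasure K)) (l : ℕ) : Measure (Fin l → K) :=
  μ.bind fun ν => Measure.pi fun _ : Fin l => (ν : Measure K)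

open scoped ENNReal NNReal BoundedContinuousFunction
set_option linter.unusedSectionVars false
set_option maxHeartbeats 1000000

section Aux

/-- Along an ultrafilter, every `ℝ≥0∞`-valued function tends to its liminf. -/
lemma ultrafilter_tendsto_liminf {X : Type*} (F : Ultrafilter X) (e : X → ℝ≥0∞) :
    Tendsto e F (nhds (Filter.liminf e F)) := by
  obtain ⟨x, -, hx⟩ := (isCompact_univ (X := ℝ≥0∞)).ultrafilter_le_nhds (F.map e)
    (by simp [le_principal_iff])
  have hTendsto : Tendsto e (F : Filter X) (nhds x) := hx
  rwa [hTendsto.liminf_eq]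

variable {K : Type*} [MetricSpace K] [CompactSpace K] [MeasurableSpace K] [BorelSpace K]

lemma continuous_lintegral_bcnn (f : K →ᵇ ℝ≥0) :
    Continuous fun ν : ProbabilityMeasure K => ∫⁻ x, (f x : ℝ≥0∞) ∂(ν : Measure K) := by
  rw [continuous_iff_continuousAt]
  intro ν
  exact continuousAt_of_tendsto_nhds
    (ProbabilityMeasure.tendsto_iff_forall_lintegral_tendsto.mp tendsto_id f)

lemma lintegral_bcnn_le (f : K →ᵇ ℝ≥0) {B : ℝ≥0} (hfB : ∀ x, f x ≤ B)
    (ν : Measure K) [IsProbabilityMeasure ν] :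
    ∫⁻ x, (f x : ℝ≥0∞) ∂ν ≤ (B : ℝ≥0∞) := by
  calc ∫⁻ x, (f x : ℝ≥0∞) ∂ν ≤ ∫⁻ _, (B : ℝ≥0∞) ∂ν :=
        lintegral_mono fun x => ENNReal.coe_le_coe.mpr (hfB x)
    _ = B := by simp

/-- The counting bound used in the Riemann-sum argument. -/
lemma step_bounds {ε B t : ℝ≥0} (hε : 0 < ε) (ht : t ≤ B) :
    ε * (((Finset.range ⌈B / ε⌉₊).filter fun j : ℕ => ((j : ℝ≥0) + 1) * ε < t).card : ℝ≥0) ≤ t ∧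
    t ≤ ε * (((Finset.range ⌈B / ε⌉₊).filter fun j : ℕ => ((j : ℝ≥0) + 1) * ε < t).card : ℝ≥0)
        + ε := by
  set N := ⌈B / ε⌉₊ with hN
  set m := ⌈t / ε⌉₊ with hm
  have hfil : ((Finset.range N).filter fun j : ℕ => ((j : ℝ≥0) + 1) * ε < t)
      = Finset.range (min (m - 1) N) := by
    ext j
    simp only [Finset.mem_filter, Finset.mem_range, lt_min_iff]
    constructor
    · rintro ⟨hjN, hlt⟩
      refine ⟨?_, hjN⟩
      have h1 : ((j + 1 : ℕ) : ℝ≥0) < t / ε := by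
        rw [lt_div_iff₀ hε]
        push_cast
        exact hlt
      have h2 : j + 1 < m := Nat.lt_ceil.mpr h1
      omega
    · rintro ⟨hjm, hjN⟩
      refine ⟨hjN, ?_⟩
      have h2 : j + 1 < m := by omega
      have h1 : ((j + 1 : ℕ) : ℝ≥0) < t / ε := Nat.lt_ceil.mp h2
      rw [lt_div_iff₀ hε] at h1
      push_cast at h1
      exact h1
  rw [hfil, Finset.card_range]
  constructor
  · -- lower bound : ε * min (m-1) N ≤ t
    rcases Nat.eq_zero_or_pos m with hm0 | hmpos
    · simp [hm0]
    rcases le_total (m - 1) N with hmin | hmin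
    · rw [min_eq_left hmin]
      have h1 : ((m - 1 : ℕ) : ℝ≥0) < t / ε := Nat.lt_ceil.mp (by omega)
      rw [lt_div_iff₀ hε] at h1
      exact (mul_comm ε _ ▸ h1.le)
    · rw [min_eq_right hmin]
      have h1 : ((N : ℕ) : ℝ≥0) < t / ε := Nat.lt_ceil.mp (by omega)
      rw [lt_div_iff₀ hε] at h1
      exact (mul_comm ε _ ▸ h1.le)
  · -- upper bound
    rcases le_total (m - 1) N with hmin | hmin
    · rw [min_eq_left hmin]
      rcases Nat.eq_zero_or_pos m with hm0 | hmpos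
      · have : t / ε ≤ 0 := by
          have := Nat.ceil_eq_zero.mp hm0
          exact this
        have ht0 : t = 0 := by
          have := (div_le_iff₀ hε).mp this
          simpa using this
        simp [ht0, hm0]
      have h1 : t / ε ≤ (m : ℝ≥0) := Nat.le_ceil _
      rw [div_le_iff₀ hε] at h1
      have hcast : ((m - 1 : ℕ) : ℝ≥0) + 1 = (m : ℝ≥0) := by
        have h1m : (1 : ℝ≥0) ≤ (m : ℝ≥0) := by exact_mod_cast hmpos
        push_cast [Nat.cast_sub hmpos]
        first
        | exact tsub_add_cancel_of_le h1m
        | · rw [add_comm]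
            exact tsub_add_cancel_of_le h1m
      calc t ≤ (m : ℝ≥0) * ε := h1
        _ = ε * ((m - 1 : ℕ) : ℝ≥0) + ε := by rw [← hcast]; ring
    · rw [min_eq_right hmin]
      have h1 : B / ε ≤ (N : ℝ≥0) := Nat.le_ceil _
      rw [div_le_iff₀ hε] at h1
      calc t ≤ B := ht
        _ ≤ (N : ℝ≥0) * ε := h1
        _ ≤ ε * (N : ℝ≥0) + ε := by rw [mul_comm]; exact le_add_of_nonneg_right bot_le


end Aux

section Compactness

variable {K : Type*} [MetricSpace K] [CompactSpace K] [MeasurableSpace K] [BorelSpace K]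

/-- Main step for compactness: a Riemann sum argument showing that the lintegral against the
content-measure is dominated by the ultrafilter limit of the lintegrals. -/
lemma lintegral_le_ult (F : Ultrafilter (ProbabilityMeasure K)) (μ₀ : Measure K)
    [IsProbabilityMeasure μ₀]
    (hG : ∀ G : Set K, IsOpen G → ∀ y : ℝ≥0∞,
      Tendsto (fun ν : ProbabilityMeasure K => (ν : Measure K) G) F (nhds y) → μ₀ G ≤ y)
    (f : K →ᵇ ℝ≥0) (B : ℝ≥0) (hfB : ∀ x, f x ≤ B) (x₀ : ℝ≥0∞)
    (hx₀ : Tendsto (fun ν : ProbabilityMeasure K => ∫⁻ x, (f x : ℝ≥0∞) ∂(ν : Measure K)) F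
      (nhds x₀)) :
    ∫⁻ x, (f x : ℝ≥0∞) ∂μ₀ ≤ x₀ := by
  refine ENNReal.le_of_forall_pos_le_add fun ε hε _ => ?_
  set N := ⌈B / ε⌉₊ with hNdef
  set U : ℕ → Set K := fun j => {x : K | ((j : ℝ≥0) + 1) * ε < f x} with hUdef
  have hUopen : ∀ j, IsOpen (U j) := fun j =>
    (isOpen_lt continuous_const (by continuity : Continuous fun x : K => (f x : ℝ≥0)))
  -- pointwise sums of indicators
  have hsum : ∀ (ν : Measure K), ∑ j ∈ Finset.range N, (ε : ℝ≥0∞) * ν (U j)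
      = ∫⁻ x, ∑ j ∈ Finset.range N, (U j).indicator (fun _ => (ε : ℝ≥0∞)) x ∂ν := by
    intro ν
    rw [lintegral_finset_sum]
    · refine Finset.sum_congr rfl fun j _ => ?_
      rw [lintegral_indicator (hUopen j).measurableSet]
      simp [mul_comm]
    · exact fun j _ => Measurable.indicator measurable_const (hUopen j).measurableSet
  have hcard : ∀ x : K, ∑ j ∈ Finset.range N, (U j).indicator (fun _ => (ε : ℝ≥0∞)) x
      = ((ε * (((Finset.range N).filter fun j : ℕ => ((j : ℝ≥0) + 1) * ε < f x).card : ℝ≥0) :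
          ℝ≥0) : ℝ≥0∞) := by
    intro x
    push_cast
    simp only [Set.indicator_apply, hUdef, Set.mem_setOf_eq]
    rw [Finset.sum_ite, Finset.sum_const, Finset.sum_const_zero, add_zero, nsmul_eq_mul, mul_comm]
  -- lower bound for each ν
  have hlow : ∀ ν : Measure K, ∑ j ∈ Finset.range N, (ε : ℝ≥0∞) * ν (U j)
      ≤ ∫⁻ x, (f x : ℝ≥0∞) ∂ν := by
    intro ν
    rw [hsum ν]
    refine lintegral_mono fun x => ?_
    rw [hcard x]
    exact ENNReal.coe_le_coe.mpr (step_bounds hε (hfB x)).1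
  -- upper bound for μ₀
  have hup : ∫⁻ x, (f x : ℝ≥0∞) ∂μ₀
      ≤ ∑ j ∈ Finset.range N, (ε : ℝ≥0∞) * μ₀ (U j) + (ε : ℝ≥0∞) := by
    have hpt : ∀ x : K, (f x : ℝ≥0∞)
        ≤ ∑ j ∈ Finset.range N, (U j).indicator (fun _ => (ε : ℝ≥0∞)) x + (ε : ℝ≥0∞) := by
      intro x
      rw [hcard x, ← ENNReal.coe_add]
      exact ENNReal.coe_le_coe.mpr (step_bounds hε (hfB x)).2
    calc ∫⁻ x, (f x : ℝ≥0∞) ∂μ₀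
        ≤ ∫⁻ x, (∑ j ∈ Finset.range N, (U j).indicator (fun _ => (ε : ℝ≥0∞)) x + (ε : ℝ≥0∞)) ∂μ₀ :=
          lintegral_mono hpt
      _ = ∑ j ∈ Finset.range N, (ε : ℝ≥0∞) * μ₀ (U j) + (ε : ℝ≥0∞) := by
          rw [lintegral_add_right _ measurable_const, lintegral_const, ← hsum μ₀]
          simp
  -- limits of the sums
  set c : ℕ → ℝ≥0∞ := fun j =>
    Filter.liminf (fun ν : ProbabilityMeasure K => (ν : Measure K) (U j)) F with hcdef
  have hctend : ∀ j, Tendsto (fun ν : ProbabilityMeasure K => (ν : Measure K) (U j)) F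
      (nhds (c j)) := fun j => ultrafilter_tendsto_liminf F _
  have hμc : ∀ j, μ₀ (U j) ≤ c j := fun j => hG (U j) (hUopen j) (c j) (hctend j)
  have hT : Tendsto (fun ν : ProbabilityMeasure K =>
        ∑ j ∈ Finset.range N, (ε : ℝ≥0∞) * (ν : Measure K) (U j)) F
      (nhds (∑ j ∈ Finset.range N, (ε : ℝ≥0∞) * c j)) :=
    tendsto_finset_sum _ fun j _ =>
      ENNReal.Tendsto.const_mul (hctend j) (Or.inr ENNReal.coe_ne_top)
  have hsum_le : ∑ j ∈ Finset.range N, (ε : ℝ≥0∞) * c j ≤ x₀ :=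
    le_of_tendsto_of_tendsto' hT hx₀ fun ν => hlow (ν : Measure K)
  calc ∫⁻ x, (f x : ℝ≥0∞) ∂μ₀
      ≤ ∑ j ∈ Finset.range N, (ε : ℝ≥0∞) * μ₀ (U j) + (ε : ℝ≥0∞) := hup
    _ ≤ ∑ j ∈ Finset.range N, (ε : ℝ≥0∞) * c j + (ε : ℝ≥0∞) := by
        gcongr with j hj
        exact hμc j
    _ ≤ x₀ + (ε : ℝ≥0∞) := by gcongr

/-- Prokhorov-type compactness for probability measures on a compact metric space. -/
theorem compactSpace_probabilityMeasure : CompactSpace (ProbabilityMeasure K) := by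
  constructor
  rw [isCompact_iff_ultrafilter_le_nhds]
  intro F _
  -- the ultrafilter limit functional on sets
  set c : Set K → ℝ≥0∞ := fun A =>
    Filter.liminf (fun ν : ProbabilityMeasure K => (ν : Measure K) A) F with hcdef
  have hc : ∀ A : Set K, Tendsto (fun ν : ProbabilityMeasure K => (ν : Measure K) A) F
      (nhds (c A)) := fun A => ultrafilter_tendsto_liminf F _
  have hcuniv : c Set.univ = 1 := by
    refine tendsto_nhds_unique (hc Set.univ) ?_
    have : (fun ν : ProbabilityMeasure K => (ν : Measure K) Set.univ) = fun _ => (1 : ℝ≥0∞) := by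
      funext ν; simp
    rw [this]
    exact tendsto_const_nhds
  have hcmono : ∀ {A B : Set K}, A ⊆ B → c A ≤ c B := fun {A B} h =>
    le_of_tendsto_of_tendsto' (hc A) (hc B) fun ν => measure_mono h
  have hcle1 : ∀ A, c A ≤ 1 := fun A => hcuniv ▸ hcmono (Set.subset_univ A)
  have hcsub : ∀ A B : Set K, c (A ∪ B) ≤ c A + c B := fun A B =>
    le_of_tendsto_of_tendsto' (hc (A ∪ B)) ((hc A).add (hc B)) fun ν => measure_union_le A B
  have hcadd : ∀ A B : Set K, Disjoint A B → MeasurableSet B → c (A ∪ B) = c A + c B := by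
    intro A B hd hB
    refine tendsto_nhds_unique (hc (A ∪ B)) ?_
    refine Tendsto.congr (fun ν => ?_) ((hc A).add (hc B))
    exact (measure_union hd hB).symm
  -- the content
  set lam : Set K → ℝ≥0∞ := fun s => ⨅ (U : Set K) (_ : IsOpen U ∧ s ⊆ U), c U with hlamdef
  have hlam_le : ∀ (s U : Set K), IsOpen U → s ⊆ U → lam s ≤ c U := fun s U hU hsU =>
    iInf_le_of_le U (iInf_le _ ⟨hU, hsU⟩)
  have hlam1 : ∀ s, lam s ≤ 1 := fun s =>
    (hlam_le s Set.univ isOpen_univ (Set.subset_univ s)).trans (le_of_eq hcuniv)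
  have hlamtop : ∀ s, lam s ≠ ⊤ := fun s => ((hlam1 s).trans_lt ENNReal.one_lt_top).ne
  have hlammono : ∀ {s t : Set K}, s ⊆ t → lam s ≤ lam t := by
    intro s t hst
    refine le_iInf fun U => le_iInf fun hU => ?_
    exact hlam_le s U hU.1 (hst.trans hU.2)
  have hexU : ∀ (s : Set K) (ε : ℝ≥0∞), ε ≠ 0 → ∃ U, IsOpen U ∧ s ⊆ U ∧ c U ≤ lam s + ε := by
    intro s ε hε
    have h1 : lam s < lam s + ε := ENNReal.lt_add_right (hlamtop s) hε
    nth_rewrite 1 [hlamdef] at h1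
    simp only [iInf_lt_iff] at h1
    obtain ⟨U, hU, hlt⟩ := h1
    exact ⟨U, hU.1, hU.2, hlt.le⟩
  have hlamsub : ∀ s t : Set K, lam (s ∪ t) ≤ lam s + lam t := by
    intro s t
    refine ENNReal.le_of_forall_pos_le_add fun ε hε _ => ?_
    obtain ⟨U₁, hU₁, hsU₁, hcU₁⟩ := hexU s ((ε : ℝ≥0∞) / 2) (by simp [hε.ne'])
    obtain ⟨U₂, hU₂, hsU₂, hcU₂⟩ := hexU t ((ε : ℝ≥0∞) / 2) (by simp [hε.ne'])
    calc lam (s ∪ t) ≤ c (U₁ ∪ U₂) :=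
          hlam_le _ _ (hU₁.union hU₂) (Set.union_subset_union hsU₁ hsU₂)
      _ ≤ c U₁ + c U₂ := hcsub U₁ U₂
      _ ≤ (lam s + (ε : ℝ≥0∞) / 2) + (lam t + (ε : ℝ≥0∞) / 2) := add_le_add hcU₁ hcU₂
      _ = lam s + lam t + (ε : ℝ≥0∞) := by
          rw [add_add_add_comm, ENNReal.add_halves]
  set L : Content K :=
    { toFun := fun C => (lam (C : Set K)).toNNReal
      mono' := fun C₁ C₂ h => by
        have := hlammono h
        exact ENNReal.toNNReal_mono (hlamtop _) this
      sup_le' := fun C₁ C₂ => by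
        have h := hlamsub (C₁ : Set K) (C₂ : Set K)
        have hC : ((C₁ ⊔ C₂ : TopologicalSpace.Compacts K) : Set K)
            = (C₁ : Set K) ∪ (C₂ : Set K) := rfl
        rw [← ENNReal.toNNReal_add (hlamtop _) (hlamtop _)]
        refine ENNReal.toNNReal_mono ?_ (by rw [hC]; exact h)
        exact ENNReal.add_ne_top.mpr ⟨hlamtop _, hlamtop _⟩
      sup_disjoint' := by
        intro C₁ C₂ hdis _ _
        have hC : ((C₁ ⊔ C₂ : TopologicalSpace.Compacts K) : Set K)
            = (C₁ : Set K) ∪ (C₂ : Set K) := rfl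
        have hge : lam (C₁ : Set K) + lam (C₂ : Set K) ≤ lam ((C₁ : Set K) ∪ (C₂ : Set K)) := by
          obtain ⟨V₁, V₂, hV₁, hV₂, hCV₁, hCV₂, hVd⟩ :=
            SeparatedNhds.of_isCompact_isCompact C₁.2 C₂.2 hdis
          refine le_iInf fun U => le_iInf fun hU => ?_
          have h1 : lam (C₁ : Set K) ≤ c (U ∩ V₁) :=
            hlam_le _ _ (hU.1.inter hV₁) (Set.subset_inter
              ((Set.subset_union_left).trans hU.2) hCV₁)
          have h2 : lam (C₂ : Set K) ≤ c (U ∩ V₂) :=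
            hlam_le _ _ (hU.1.inter hV₂) (Set.subset_inter
              ((Set.subset_union_right).trans hU.2) hCV₂)
          calc lam (C₁ : Set K) + lam (C₂ : Set K) ≤ c (U ∩ V₁) + c (U ∩ V₂) := add_le_add h1 h2
            _ = c ((U ∩ V₁) ∪ (U ∩ V₂)) :=
              (hcadd _ _ (hVd.mono Set.inter_subset_right Set.inter_subset_right)
                (hU.1.inter hV₂).measurableSet).symm
            _ ≤ c U := hcmono (Set.union_subset Set.inter_subset_left Set.inter_subset_left)
        have heq : lam ((C₁ : Set K) ∪ (C₂ : Set K)) = lam (C₁ : Set K) + lam (C₂ : Set K) :=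
          le_antisymm (hlamsub _ _) hge
        show (lam ((C₁ ⊔ C₂ : TopologicalSpace.Compacts K) : Set K)).toNNReal
          = (lam (C₁ : Set K)).toNNReal + (lam (C₂ : Set K)).toNNReal
        rw [hC, heq, ENNReal.toNNReal_add (hlamtop _) (hlamtop _)] } with hLdef
  have hLcoe : ∀ C : TopologicalSpace.Compacts K, (L C : ℝ≥0∞) = lam (C : Set K) := by
    intro C
    exact ENNReal.coe_toNNReal (hlamtop _)
  set μ₀ : Measure K := L.measure with hμ₀def
  have hμ₀open : ∀ (U : Set K), (hU : IsOpen U) → μ₀ U ≤ c U := by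
    intro U hU
    rw [hμ₀def, Content.measure_apply _ hU.measurableSet,
      show L.outerMeasure U = L.innerContent ⟨U, hU⟩ from L.outerMeasure_opens ⟨U, hU⟩]
    show (⨆ (C : TopologicalSpace.Compacts K) (_ : (C : Set K) ⊆ U), (L C : ℝ≥0∞)) ≤ c U
    refine iSup₂_le fun C hC => ?_
    rw [hLcoe C]
    exact hlam_le _ _ hU hC
  have hμ₀univ : μ₀ Set.univ = 1 := by
    rw [hμ₀def, Content.measure_apply _ MeasurableSet.univ,
      show L.outerMeasure Set.univ = L.innerContent ⟨Set.univ, isOpen_univ⟩ from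
        L.outerMeasure_opens ⟨Set.univ, isOpen_univ⟩]
    show (⨆ (C : TopologicalSpace.Compacts K) (_ : (C : Set K) ⊆ Set.univ), (L C : ℝ≥0∞)) = 1
    refine le_antisymm (iSup₂_le fun C _ => ?_) ?_
    · rw [hLcoe C]; exact hlam1 _
    · have hlamuniv : lam Set.univ = 1 := by
        refine le_antisymm (hlam1 _) ?_
        refine le_iInf fun U => le_iInf fun hU => ?_
        rw [Set.univ_subset_iff.mp hU.2]
        exact hcuniv.ge
      refine le_iSup₂_of_le ⟨Set.univ, isCompact_univ⟩ (Set.subset_univ _) ?_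
      rw [hLcoe _]
      simp only [TopologicalSpace.Compacts.coe_mk]
      rw [hlamuniv]
  haveI hμ₀prob : IsProbabilityMeasure μ₀ := ⟨hμ₀univ⟩
  set ν₀ : ProbabilityMeasure K := ⟨μ₀, hμ₀prob⟩ with hν₀def
  refine ⟨ν₀, Set.mem_univ _, ?_⟩
  have hgoal : Tendsto (id : ProbabilityMeasure K → ProbabilityMeasure K) F (nhds ν₀) := by
    rw [ProbabilityMeasure.tendsto_iff_forall_lintegral_tendsto]
    intro f
    set B : ℝ≥0 := nndist f 0 with hBdef
    have hfB : ∀ x, f x ≤ B := by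
      intro x
      have h1 : dist (f x) ((0 : K →ᵇ ℝ≥0) x) ≤ dist f 0 :=
        BoundedContinuousFunction.dist_coe_le_dist x
      rw [← NNReal.coe_le_coe]
      have h2 : ((f x : ℝ≥0) : ℝ) ≤ ((nndist f 0 : ℝ≥0) : ℝ) := by
        rw [coe_nndist]; simpa [NNReal.dist_eq] using h1
      exact h2
    have hG : ∀ G : Set K, IsOpen G → ∀ y : ℝ≥0∞,
        Tendsto (fun ν : ProbabilityMeasure K => (ν : Measure K) G) F (nhds y) → μ₀ G ≤ y := by
      intro G hGopen y hy
      rw [tendsto_nhds_unique hy (hc G)]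
      exact hμ₀open G hGopen
    set x₀ : ℝ≥0∞ := Filter.liminf
      (fun ν : ProbabilityMeasure K => ∫⁻ x, (f x : ℝ≥0∞) ∂(ν : Measure K)) F with hx₀def
    have hx₀ : Tendsto (fun ν : ProbabilityMeasure K => ∫⁻ x, (f x : ℝ≥0∞) ∂(ν : Measure K)) F
        (nhds x₀) := ultrafilter_tendsto_liminf F _
    have hx₀B : x₀ ≤ (B : ℝ≥0∞) :=
      le_of_tendsto hx₀ (Eventually.of_forall fun ν => lintegral_bcnn_le f hfB _)
    have hint₀B : ∫⁻ x, (f x : ℝ≥0∞) ∂μ₀ ≤ (B : ℝ≥0∞) := lintegral_bcnn_le f hfB μ₀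
    have hA1 : ∫⁻ x, (f x : ℝ≥0∞) ∂μ₀ ≤ x₀ := lintegral_le_ult F μ₀ hG f B hfB x₀ hx₀
    -- the reverse inequality using B - f
    set f' : K →ᵇ ℝ≥0 :=
      ⟨⟨fun x => B - f x, by continuity⟩, ⟨(B : ℝ), fun x y => by
        rw [NNReal.dist_eq, abs_sub_le_iff]
        constructor
        · calc ((B - f x : ℝ≥0) : ℝ) - ((B - f y : ℝ≥0) : ℝ) ≤ ((B - f x : ℝ≥0) : ℝ) := by
                have := (B - f y).coe_nonneg
                linarith
            _ ≤ (B : ℝ) := NNReal.coe_le_coe.mpr tsub_le_self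
        · calc ((B - f y : ℝ≥0) : ℝ) - ((B - f x : ℝ≥0) : ℝ) ≤ ((B - f y : ℝ≥0) : ℝ) := by
                have := (B - f x).coe_nonneg
                linarith
            _ ≤ (B : ℝ) := NNReal.coe_le_coe.mpr tsub_le_self⟩⟩ with hf'def
    have hf'B : ∀ x, f' x ≤ B := fun x => tsub_le_self
    have hf'sum : ∀ (ν : Measure K), IsProbabilityMeasure ν →
        ∫⁻ x, (f' x : ℝ≥0∞) ∂ν = (B : ℝ≥0∞) - ∫⁻ x, (f x : ℝ≥0∞) ∂ν := by
      intro ν hν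
      have hpt : ∀ x : K, (f' x : ℝ≥0∞) + (f x : ℝ≥0∞) = (B : ℝ≥0∞) := by
        intro x
        have hxx : f' x + f x = B := by
          show (B - f x) + f x = B
          exact tsub_add_cancel_of_le (hfB x)
        rw [← ENNReal.coe_add, hxx]
      have hs : ∫⁻ x, ((f' x : ℝ≥0∞) + (f x : ℝ≥0∞)) ∂ν = (B : ℝ≥0∞) := by
        rw [lintegral_congr hpt, lintegral_const]
        simp
      rw [lintegral_add_left (f'.continuous.measurable.coe_nnreal_ennreal)] at hs
      exact ENNReal.eq_sub_of_add_eq (((lintegral_bcnn_le f hfB ν).trans_lt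
        ENNReal.coe_lt_top).ne) hs
    have hx₀' : Tendsto (fun ν : ProbabilityMeasure K => ∫⁻ x, (f' x : ℝ≥0∞) ∂(ν : Measure K)) F
        (nhds ((B : ℝ≥0∞) - x₀)) := by
      refine Tendsto.congr (fun ν => (hf'sum (ν : Measure K) inferInstance).symm) ?_
      exact ENNReal.Tendsto.sub tendsto_const_nhds hx₀ (Or.inl ENNReal.coe_ne_top)
    have hA2 : ∫⁻ x, (f' x : ℝ≥0∞) ∂μ₀ ≤ (B : ℝ≥0∞) - x₀ :=
      lintegral_le_ult F μ₀ hG f' B hf'B _ hx₀'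
    rw [hf'sum μ₀ hμ₀prob] at hA2
    have hA3 : x₀ ≤ ∫⁻ x, (f x : ℝ≥0∞) ∂μ₀ :=
      (ENNReal.sub_le_sub_iff_left hx₀B ENNReal.coe_ne_top).mp hA2
    have : ∫⁻ x, (f x : ℝ≥0∞) ∂μ₀ = x₀ := le_antisymm hA1 hA3
    have hν₀coe : (ν₀ : Measure K) = μ₀ := rfl
    rw [hν₀coe, this]
    exact hx₀
  exact hgoal

end Compactness

section Moments

variable {K : Type*} [MetricSpace K] [CompactSpace K] [MeasurableSpace K] [BorelSpace K]

lemma measurable_measure_apply {s : Set K} (hs : MeasurableSet s) :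
    Measurable fun ν : ProbabilityMeasure K => (ν : Measure K) s := by
  have h_eq : (inferInstance : MeasurableSpace K)
      = MeasurableSpace.generateFrom {t : Set K | IsClosed t} := by
    rw [BorelSpace.measurable_eq (α := K), borel_eq_generateFrom_isClosed]
  refine MeasurableSpace.induction_on_inter
    (C := fun s _ => Measurable fun ν : ProbabilityMeasure K => (ν : Measure K) s)
    h_eq isPiSystem_isClosed ?_ ?_ ?_ ?_ _ hs
  · simp only [measure_empty]
    exact measurable_const
  · intro t ht
    have hlim : ∀ ν : ProbabilityMeasure K,
        Tendsto (fun n => ∫⁻ x, (ht.apprSeq n x : ℝ≥0∞) ∂(ν : Measure K)) atTop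
          (nhds ((ν : Measure K) t)) := fun ν =>
      HasOuterApproxClosed.tendsto_lintegral_apprSeq ht (ν : Measure K)
    have heq : (fun ν : ProbabilityMeasure K => (ν : Measure K) t)
        = fun ν : ProbabilityMeasure K => Filter.liminf
            (fun n => ∫⁻ x, (ht.apprSeq n x : ℝ≥0∞) ∂(ν : Measure K)) atTop := by
      funext ν
      exact ((hlim ν).liminf_eq).symm
    rw [heq]
    refine Measurable.liminf fun n => ?_
    exact (continuous_lintegral_bcnn (ht.apprSeq n)).measurable
  · intro t ht hmt
    have heq : (fun ν : ProbabilityMeasure K => (ν : Measure K) tᶜ)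
        = fun ν : ProbabilityMeasure K => 1 - (ν : Measure K) t := by
      funext ν
      rw [measure_compl ht (measure_ne_top _ _)]
      simp
    rw [heq]
    exact Measurable.const_sub hmt 1
  · intro g hdis hmeas hm
    have heq : (fun ν : ProbabilityMeasure K => (ν : Measure K) (⋃ i, g i))
        = fun ν : ProbabilityMeasure K => ∑' i, (ν : Measure K) (g i) := by
      funext ν
      exact measure_iUnion hdis hmeas
    rw [heq]
    exact Measurable.ennreal_tsum hm

lemma isProbPi (l : ℕ) (ν : Measure K) [IsProbabilityMeasure ν] :
    IsProbabilityMeasure (Measure.pi fun _ : Fin l => ν) := by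
  constructor
  rw [Measure.pi_univ]
  simp

lemma measurable_pi_of_prob (l : ℕ) :
    Measurable fun ν : ProbabilityMeasure K =>
      Measure.pi fun _ : Fin l => (ν : Measure K) := by
  haveI hpiprob : ∀ ν : ProbabilityMeasure K,
      IsProbabilityMeasure (Measure.pi fun _ : Fin l => (ν : Measure K)) := fun ν =>
    isProbPi l (ν : Measure K)
  refine Measure.measurable_of_measurable_coe _ fun s hs => ?_
  have h_eq : (inferInstance : MeasurableSpace (Fin l → K))
      = MeasurableSpace.generateFrom
          (Set.pi Set.univ '' Set.pi Set.univ fun _ : Fin l => {s : Set K | MeasurableSet s}) :=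
    generateFrom_pi.symm
  refine MeasurableSpace.induction_on_inter
    (C := fun s _ => Measurable fun ν : ProbabilityMeasure K =>
      (Measure.pi fun _ : Fin l => (ν : Measure K)) s)
    h_eq isPiSystem_pi ?_ ?_ ?_ ?_ _ hs
  · simp only [measure_empty]
    exact measurable_const
  · rintro t ⟨t', ht', rfl⟩
    have heq : (fun ν : ProbabilityMeasure K =>
        (Measure.pi fun _ : Fin l => (ν : Measure K)) (Set.pi Set.univ t'))
        = fun ν : ProbabilityMeasure K => ∏ i : Fin l, (ν : Measure K) (t' i) := by
      funext ν
      exact Measure.pi_pi _ _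
    rw [heq]
    exact Finset.measurable_prod _ fun i _ =>
      measurable_measure_apply (ht' i (Set.mem_univ i))
  · intro t ht hmt
    have heq : (fun ν : ProbabilityMeasure K =>
        (Measure.pi fun _ : Fin l => (ν : Measure K)) tᶜ)
        = fun ν : ProbabilityMeasure K =>
          1 - (Measure.pi fun _ : Fin l => (ν : Measure K)) t := by
      funext ν
      rw [measure_compl ht (measure_ne_top _ _)]
      simp
    rw [heq]
    exact Measurable.const_sub hmt 1
  · intro g hdis hmeas hm
    have heq : (fun ν : ProbabilityMeasure K =>
        (Measure.pi fun _ : Fin l => (ν : Measure K)) (⋃ i, g i))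
        = fun ν : ProbabilityMeasure K =>
          ∑' i, (Measure.pi fun _ : Fin l => (ν : Measure K)) (g i) := by
      funext ν
      exact measure_iUnion hdis hmeas
    rw [heq]
    exact Measurable.ennreal_tsum hm

lemma integral_pi_prod {l : ℕ} (g : Fin l → (K →ᵇ ℝ)) (ν : Measure K) [IsProbabilityMeasure ν] :
    ∫ x : Fin l → K, ∏ i, g i (x i) ∂(Measure.pi fun _ : Fin l => ν)
      = ∏ i, ∫ y, g i y ∂ν := by
  letI : MeasureSpace K := ⟨ν⟩
  haveI : SigmaFinite (volume : Measure K) := inferInstanceAs (SigmaFinite ν)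
  have h := MeasureTheory.integral_fintype_prod_eq_prod (ι := Fin l) (E := fun _ => K)
    (f := fun i y => g i y) (μ := fun _ => ν)
  have hvol : (volume : Measure (Fin l → K)) = Measure.pi fun _ : Fin l => ν := by
    rw [MeasureTheory.volume_pi]
    rfl
  rw [← hvol]
  exact h

/-- The key moment identity. -/
lemma integral_momentMeasure {l : ℕ} (P : Measure (ProbabilityMeasure K))
    [IsProbabilityMeasure P] (g : Fin l → (K →ᵇ ℝ)) (hg : ∀ i x, 0 ≤ g i x) :
    ∫ x, (∏ i, g i (x i)) ∂(momentMeasure P l)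
      = ∫ ν, ∏ i, (∫ y, g i y ∂(ν : Measure K)) ∂P := by
  haveI : ∀ ν : ProbabilityMeasure K,
      IsProbabilityMeasure (Measure.pi fun _ : Fin l => (ν : Measure K)) := fun ν =>
    isProbPi l (ν : Measure K)
  set F : (Fin l → K) → ℝ := fun x => ∏ i, g i (x i) with hFdef
  have hFcont : Continuous F := by
    refine continuous_finset_prod _ fun i _ => ?_
    exact (g i).continuous.comp (continuous_apply i)
  have hFnn : ∀ x, 0 ≤ F x := fun x => Finset.prod_nonneg fun i _ => hg i (x i)
  -- inner integral
  have hinner : ∀ ν : ProbabilityMeasure K,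
      ∫ x, F x ∂(Measure.pi fun _ : Fin l => (ν : Measure K))
        = ∏ i, ∫ y, g i y ∂(ν : Measure K) := fun ν => integral_pi_prod g (ν : Measure K)
  -- integrability of F over each pi measure
  have hFint : ∀ ν : ProbabilityMeasure K,
      Integrable F (Measure.pi fun _ : Fin l => (ν : Measure K)) := by
    intro ν
    have := (BoundedContinuousFunction.mkOfCompact ⟨F, hFcont⟩).integrable
      (μ := Measure.pi fun _ : Fin l => (ν : Measure K))
    exact this
  have hinner' : ∀ ν : ProbabilityMeasure K,
      ∫⁻ x, ENNReal.ofReal (F x) ∂(Measure.pi fun _ : Fin l => (ν : Measure K))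
        = ENNReal.ofReal (∏ i, ∫ y, g i y ∂(ν : Measure K)) := by
    intro ν
    rw [← hinner ν]
    exact (ofReal_integral_eq_lintegral_ofReal (hFint ν) (Eventually.of_forall hFnn)).symm
  -- the outer function is continuous and bounded
  set H : ProbabilityMeasure K → ℝ := fun ν => ∏ i, ∫ y, g i y ∂(ν : Measure K) with hHdef
  have hHcont : Continuous H := by
    refine continuous_finset_prod _ fun i _ => ?_
    exact ProbabilityMeasure.continuous_integral_boundedContinuousFunction (g i)
  have hHnn : ∀ ν, 0 ≤ H ν := fun ν =>
    Finset.prod_nonneg fun i _ => integral_nonneg (hg i)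
  have hHbdd : ∀ ν, ‖H ν‖ ≤ ∏ i, ‖g i‖ := by
    intro ν
    rw [norm_prod]
    refine Finset.prod_le_prod (fun i _ => norm_nonneg _) fun i _ => ?_
    calc ‖∫ y, g i y ∂(ν : Measure K)‖ ≤ ‖g i‖ * ((ν : Measure K) Set.univ).toReal :=
          norm_integral_le_of_norm_le_const
            (Eventually.of_forall fun y => (g i).norm_coe_le_norm y)
      _ = ‖g i‖ := by simp
  have hHint : Integrable H P := by
    have := (BoundedContinuousFunction.ofNormedAddCommGroup H hHcont (∏ i, ‖g i‖)
      hHbdd).integrable (μ := P)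
    simpa using this
  -- measurability of the kernel
  have hm : Measurable fun ν : ProbabilityMeasure K =>
      Measure.pi fun _ : Fin l => (ν : Measure K) := measurable_pi_of_prob l
  -- chain of equalities
  have hbind : momentMeasure P l
      = P.bind fun ν : ProbabilityMeasure K => Measure.pi fun _ : Fin l => (ν : Measure K) := rfl
  haveI : IsProbabilityMeasure (momentMeasure P l) := by
    constructor
    rw [hbind, Measure.bind_apply MeasurableSet.univ hm.aemeasurable]
    simp
  have h1 : ∫ x, F x ∂(momentMeasure P l)
      = (∫⁻ x, ENNReal.ofReal (F x) ∂(momentMeasure P l)).toReal := by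
    rw [integral_eq_lintegral_of_nonneg_ae (Eventually.of_forall hFnn)
      hFcont.aestronglyMeasurable]
  have h2 : ∫⁻ x, ENNReal.ofReal (F x) ∂(momentMeasure P l)
      = ∫⁻ ν, ∫⁻ x, ENNReal.ofReal (F x)
          ∂(Measure.pi fun _ : Fin l => (ν : Measure K)) ∂P := by
    rw [hbind]
    exact Measure.lintegral_bind hm.aemeasurable (ENNReal.measurable_ofReal.comp hFcont.measurable).aemeasurable
  have h3 : ∫⁻ ν, ∫⁻ x, ENNReal.ofReal (F x)
        ∂(Measure.pi fun _ : Fin l => (ν : Measure K)) ∂P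
      = ∫⁻ ν, ENNReal.ofReal (H ν) ∂P := by
    refine lintegral_congr fun ν => ?_
    rw [hinner' ν]
  have h4 : ∫⁻ ν, ENNReal.ofReal (H ν) ∂P = ENNReal.ofReal (∫ ν, H ν ∂P) :=
    (ofReal_integral_eq_lintegral_ofReal hHint (Eventually.of_forall hHnn)).symm
  rw [show (∫ x, (∏ i, g i (x i)) ∂(momentMeasure P l)) = ∫ x, F x ∂(momentMeasure P l) from rfl,
    h1, h2, h3, h4, ENNReal.toReal_ofReal (integral_nonneg hHnn)]

end Moments

/-- If all moment measures of a sequence of random probability measures on a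
compact metric space converge weakly to those of `μ`, then the laws `μₙ`
converge weakly to `μ`. -/
theorem weak_convergence_of_moment_measures
    {K : Type*} [MetricSpace K] [CompactSpace K] [MeasurableSpace K] [BorelSpace K]
    (μn : ℕ → ProbabilityMeasure (ProbabilityMeasure K))
    (μ : ProbabilityMeasure (ProbabilityMeasure K))
    (hmom : ∀ l : ℕ, 1 ≤ l → ∀ f : BoundedContinuousFunction (Fin l → K) ℝ,
      Tendsto (fun n => ∫ x, f x ∂(momentMeasure (μn n : Measure (ProbabilityMeasure K)) l))
        atTop (nhds (∫ x, f x ∂(momentMeasure (μ : Measure (ProbabilityMeasure K)) l)))) :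
    Tendsto μn atTop (nhds μ) := by
  haveI : CompactSpace (ProbabilityMeasure K) := compactSpace_probabilityMeasure
  rw [ProbabilityMeasure.tendsto_iff_forall_integral_tendsto]
  intro f
  -- the moment functionals
  set genMap : (K →ᵇ ℝ) → C(ProbabilityMeasure K, ℝ) := fun g =>
    ⟨fun ν : ProbabilityMeasure K => ∫ y, g y ∂(ν : Measure K),
      ProbabilityMeasure.continuous_integral_boundedContinuousFunction g⟩ with hgenDef
  set S₀ : Set C(ProbabilityMeasure K, ℝ) :=
    {h | ∃ g : K →ᵇ ℝ, (∀ x, 0 ≤ g x) ∧ h = genMap g} with hS₀def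
  set A : Subalgebra ℝ C(ProbabilityMeasure K, ℝ) := Algebra.adjoin ℝ S₀ with hAdef
  -- integrability of continuous functions on the compact space of measures
  have hint : ∀ (h' : C(ProbabilityMeasure K, ℝ)) (P : Measure (ProbabilityMeasure K))
      [IsProbabilityMeasure P], Integrable h' P := by
    intro h' P hP
    have := (BoundedContinuousFunction.mkOfCompact h').integrable (μ := P)
    exact this
  -- A separates points
  have hsep : A.SeparatesPoints := by
    intro ν₁ ν₂ hne
    by_contra hcon
    push_neg at hcon
    have hall : ∀ g : K →ᵇ ℝ, (∀ x, 0 ≤ g x) →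
        ∫ y, g y ∂(ν₁ : Measure K) = ∫ y, g y ∂(ν₂ : Measure K) := by
      intro g hgnn
      have hmem : (genMap g : C(ProbabilityMeasure K, ℝ)) ∈ A :=
        Algebra.subset_adjoin ⟨g, hgnn, rfl⟩
      exact hcon (genMap g) ⟨genMap g, hmem, rfl⟩
    have hMeq : (ν₁ : Measure K) = (ν₂ : Measure K) := by
      refine ext_of_forall_lintegral_eq_of_IsFiniteMeasure fun f0 => ?_
      set greal : K →ᵇ ℝ := BoundedContinuousFunction.ofNormedAddCommGroup
        (fun x => (f0 x : ℝ)) (NNReal.continuous_coe.comp f0.continuous)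
        ((nndist f0 0 : ℝ)) (fun x => by
          have h1 : dist (f0 x) ((0 : K →ᵇ ℝ≥0) x) ≤ dist f0 0 :=
            BoundedContinuousFunction.dist_coe_le_dist x
          simpa [NNReal.dist_eq, Real.norm_eq_abs,
            abs_of_nonneg (f0 x).coe_nonneg] using h1) with hgrealdef
    
      have hgrealcoe : ∀ x, greal x = (f0 x : ℝ) := fun x => rfl
      have hgrealnn : ∀ x, 0 ≤ greal x := fun x => (f0 x).coe_nonneg
      have hi1 : Integrable (fun x => (f0 x : ℝ)) (ν₁ : Measure K) := by
        have := greal.integrable (μ := (ν₁ : Measure K)); exact this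
      have hi2 : Integrable (fun x => (f0 x : ℝ)) (ν₂ : Measure K) := by
        have := greal.integrable (μ := (ν₂ : Measure K)); exact this
      rw [lintegral_coe_eq_integral _ hi1, lintegral_coe_eq_integral _ hi2]
      exact congrArg ENNReal.ofReal (hall greal hgrealnn)
    exact hne (ProbabilityMeasure.toMeasure_injective hMeq)
  -- convergence of integrals for all elements of A
  have hconv : ∀ h : C(ProbabilityMeasure K, ℝ), h ∈ A →
      Tendsto (fun n => ∫ ν, h ν ∂(μn n : Measure (ProbabilityMeasure K))) atTop
        (nhds (∫ ν, h ν ∂(μ : Measure (ProbabilityMeasure K)))) := by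
    intro h hh
    have hh' : h ∈ Subalgebra.toSubmodule (Algebra.adjoin ℝ S₀) := hh
    rw [Algebra.adjoin_eq_span] at hh'
    clear hh
    induction hh' using Submodule.span_induction with
    | mem x hx =>
      have hxSS : ∃ (l : ℕ) (g : Fin l → (K →ᵇ ℝ)), (∀ i x', 0 ≤ g i x') ∧
          ∀ ν : ProbabilityMeasure K, x ν = ∏ i, ∫ y, g i y ∂(ν : Measure K) := by
        refine Submonoid.closure_induction (fun y hy => ?_) ?_ (fun y z _ _ hyp hzp => ?_) hx
        · obtain ⟨g, hgnn, rfl⟩ := hy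
          refine ⟨1, fun _ => g, fun _ => hgnn, fun ν => ?_⟩
          show ∫ y, g y ∂(ν : Measure K) = _
          simp
        · exact ⟨0, fun _ => 0, fun i => i.elim0, fun ν => by simp⟩
        · obtain ⟨l₁, g₁, hg₁, he₁⟩ := hyp
          obtain ⟨l₂, g₂, hg₂, he₂⟩ := hzp
          refine ⟨l₁ + l₂, Fin.append g₁ g₂, ?_, fun ν => ?_⟩
          · intro i x'
            refine Fin.addCases (motive := fun i => 0 ≤ Fin.append g₁ g₂ i x')
              (fun j => ?_) (fun j => ?_) i
            · simpa only [Fin.append_left] using hg₁ j x'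
            · simpa only [Fin.append_right] using hg₂ j x'
          · rw [ContinuousMap.mul_apply, he₁ ν, he₂ ν, Fin.prod_univ_add]
            congr 1
            · exact Finset.prod_congr rfl fun j _ => by simp only [Fin.append_left]
            · exact Finset.prod_congr rfl fun j _ => by simp only [Fin.append_right]
      obtain ⟨l, g, hgnn, hrepr⟩ := hxSS
      rcases Nat.eq_zero_or_pos l with hl0 | hlpos
      · have hone : ∀ ν : ProbabilityMeasure K, x ν = 1 := by
          intro ν
          rw [hrepr ν]
          subst hl0
          simp
        have hcint : ∀ (P : Measure (ProbabilityMeasure K)) [IsProbabilityMeasure P],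
            ∫ ν, x ν ∂P = 1 := by
          intro P hP
          rw [show (fun ν => x ν) = fun _ : ProbabilityMeasure K => (1 : ℝ) from
            funext hone]
          simp
        rw [hcint]
        have : (fun n => ∫ ν, x ν ∂(μn n : Measure (ProbabilityMeasure K)))
            = fun _ => (1 : ℝ) := funext fun n => hcint _
        rw [this]
        exact tendsto_const_nhds
      · have hFcont : Continuous fun x' : Fin l → K => ∏ i, g i (x' i) := by
          refine continuous_finset_prod _ fun i _ => ?_
          exact (g i).continuous.comp (continuous_apply i)
        set F0 : BoundedContinuousFunction (Fin l → K) ℝ :=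
          BoundedContinuousFunction.mkOfCompact ⟨fun x' => ∏ i, g i (x' i), hFcont⟩ with hF0def
        have hre : ∀ (P : Measure (ProbabilityMeasure K)) [IsProbabilityMeasure P],
            ∫ x', F0 x' ∂(momentMeasure P l) = ∫ ν, x ν ∂P := by
          intro P hP
          have h1 : ∫ x', F0 x' ∂(momentMeasure P l)
              = ∫ x', (∏ i, g i (x' i)) ∂(momentMeasure P l) := rfl
          rw [h1, integral_momentMeasure P g hgnn]
          exact integral_congr_ae (Eventually.of_forall fun ν => (hrepr ν).symm)
        have hT := hmom l hlpos F0
        have hfun : (fun n => ∫ x', F0 x' ∂(momentMeasure (μn n : Measure (ProbabilityMeasure K)) l))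
            = fun n => ∫ ν, x ν ∂(μn n : Measure (ProbabilityMeasure K)) :=
          funext fun n => hre _
        rw [hfun, hre (μ : Measure (ProbabilityMeasure K))] at hT
        exact hT
    | zero =>
      simp only [ContinuousMap.zero_apply, integral_zero]
      exact tendsto_const_nhds
    | add x y hx hy hpx hpy =>
      have hi : ∀ (P : Measure (ProbabilityMeasure K)) [IsProbabilityMeasure P],
          ∫ ν, (x + y) ν ∂P = ∫ ν, x ν ∂P + ∫ ν, y ν ∂P := by
        intro P hP
        simp only [ContinuousMap.add_apply]
        exact integral_add (hint x P) (hint y P)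
      have : (fun n => ∫ ν, (x + y) ν ∂(μn n : Measure (ProbabilityMeasure K)))
          = fun n => ∫ ν, x ν ∂(μn n : Measure (ProbabilityMeasure K))
            + ∫ ν, y ν ∂(μn n : Measure (ProbabilityMeasure K)) := funext fun n => hi _
      rw [this, hi (μ : Measure (ProbabilityMeasure K))]
      exact hpx.add hpy
    | smul a x hx hpx =>
      have hi : ∀ (P : Measure (ProbabilityMeasure K)),
          ∫ ν, (a • x) ν ∂P = a • ∫ ν, x ν ∂P := by
        intro P
        simp only [ContinuousMap.smul_apply]
        exact integral_smul a _
      have : (fun n => ∫ ν, (a • x) ν ∂(μn n : Measure (ProbabilityMeasure K)))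
          = fun n => a • ∫ ν, x ν ∂(μn n : Measure (ProbabilityMeasure K)) :=
        funext fun n => hi _
      rw [this, hi (μ : Measure (ProbabilityMeasure K))]
      exact hpx.const_smul a
  -- Stone-Weierstrass approximation step
  rw [Metric.tendsto_atTop]
  intro ε hε
  obtain ⟨g, hg⟩ := ContinuousMap.exists_mem_subalgebra_near_continuous_of_separatesPoints
    A hsep (⇑f) f.continuous (ε / 4) (by positivity)
  have hgconv := hconv (g : C(ProbabilityMeasure K, ℝ)) g.2
  have hbound : ∀ (P : Measure (ProbabilityMeasure K)) [IsProbabilityMeasure P],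
      dist (∫ ν, f ν ∂P) (∫ ν, (g : C(ProbabilityMeasure K, ℝ)) ν ∂P) ≤ ε / 4 := by
    intro P hP
    rw [Real.dist_eq, ← integral_sub (f.integrable P)
      (hint (g : C(ProbabilityMeasure K, ℝ)) P)]
    have hb : ∀ ν, ‖f ν - (g : C(ProbabilityMeasure K, ℝ)) ν‖ ≤ ε / 4 := fun ν => by
      rw [norm_sub_rev]
      exact (hg ν).le
    calc |∫ ν, (f ν - (g : C(ProbabilityMeasure K, ℝ)) ν) ∂P|
        = ‖∫ ν, (f ν - (g : C(ProbabilityMeasure K, ℝ)) ν) ∂P‖ := (Real.norm_eq_abs _).symm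
      _ ≤ (ε / 4) * (P Set.univ).toReal :=
          norm_integral_le_of_norm_le_const (Eventually.of_forall hb)
      _ = ε / 4 := by simp
  obtain ⟨N, hN⟩ := Metric.tendsto_atTop.mp hgconv (ε / 4) (by positivity)
  refine ⟨N, fun n hn => ?_⟩
  calc dist (∫ ν, f ν ∂(μn n : Measure (ProbabilityMeasure K)))
        (∫ ν, f ν ∂(μ : Measure (ProbabilityMeasure K)))
      ≤ dist (∫ ν, f ν ∂(μn n : Measure (ProbabilityMeasure K)))
          (∫ ν, (g : C(ProbabilityMeasure K, ℝ)) ν ∂(μn n : Measure (ProbabilityMeasure K)))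
        + dist (∫ ν, (g : C(ProbabilityMeasure K, ℝ)) ν ∂(μn n : Measure (ProbabilityMeasure K)))
            (∫ ν, (g : C(ProbabilityMeasure K, ℝ)) ν ∂(μ : Measure (ProbabilityMeasure K)))
        + dist (∫ ν, (g : C(ProbabilityMeasure K, ℝ)) ν ∂(μ : Measure (ProbabilityMeasure K)))
            (∫ ν, f ν ∂(μ : Measure (ProbabilityMeasure K))) := dist_triangle4 _ _ _ _
    _ < ε / 4 + ε / 4 + ε / 4 := by
        refine add_lt_add_of_lt_of_le (add_lt_add_of_le_of_lt (hbound _) (hN n hn)) ?_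
        rw [dist_comm]
        exact hbound _
    _ < ε := by linarith
end
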